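/- Let A be a (1̄,t)-locating array with N rows, k columns, alphabet sizes (v₁,…,v_k), and fix i∈{1,…,k} and a with v_i < a ≤ 2v_i. Let A' be obtained from A by relabeling, in column i only, the symbols 0,1,…,a−v_i−1 to v_i,v_i+1,…,a−1 respectively. Then the 2N×k vertical juxtaposition of A and A' is a (1̄,t)-locating array with alphabet sizes (v₁,…,v_{i−1},a,v_{i+1},…,v_k). -/

import Mathlib

open Finset

/-- The set of rows of array `A` containing the interaction `(I, σ)`. -/
def rowsOf {R ι : Type*} [Fintype R] [DecidableEq ι] (A : R → ι → ℕ)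
    (I : Finset ι) (σ : ι → ℕ) : Finset R :=
  Finset.univ.filter fun r => ∀ i ∈ I, A r i = σ i

/-- `(I, σ)` is a `t`-way interaction for alphabet sizes `v`. -/
def isInter {ι : Type*} (v : ι → ℕ) (t : ℕ) (I : Finset ι) (σ : ι → ℕ) : Prop :=
  I.card = t ∧ ∀ i ∈ I, σ i < v i

/-- Mixed covering array of strength `t`: every `t`-way interaction appears in some row. -/
def isMCA {R ι : Type*} [Fintype R] [DecidableEq ι] (A : R → ι → ℕ) (v : ι → ℕ) (t : ℕ) : Prop :=
  ∀ I σ, isInter v t I σ → (rowsOf A I σ).Nonempty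

/-- `(1,t)`-locating: distinct `t`-way interactions have distinct row supports. -/
def isLocating {R ι : Type*} [Fintype R] [DecidableEq ι] (A : R → ι → ℕ) (v : ι → ℕ) (t : ℕ) : Prop :=
  ∀ I₁ σ₁ I₂ σ₂, isInter v t I₁ σ₁ → isInter v t I₂ σ₂ →
    rowsOf A I₁ σ₁ = rowsOf A I₂ σ₂ → I₁ = I₂ ∧ ∀ i ∈ I₁, σ₁ i = σ₂ i

/-- `(1̄,t)`-locating array: an MCA which is `(1,t)`-locating. -/
def isLA {R ι : Type*} [Fintype R] [DecidableEq ι] (A : R → ι → ℕ) (v : ι → ℕ) (t : ℕ) : Prop :=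
  isMCA A v t ∧ isLocating A v t

/-- The last `t` columns (0-based indices `≥ k - t`). -/
def lastCols (k t : ℕ) : Finset (Fin k) :=
  Finset.univ.filter fun i => k - t ≤ (i : ℕ)

/-- Doubling construction: relabel the symbols `0, …, a - v_c - 1` of column `c` to
`v_c, …, a-1` and stack; the result is a `(1-bar,t)`-locating array with `v_c` replaced by
`a`, whenever `v_c < a ≤ 2 v_c`. -/
theorem stmt_12 {N k t : ℕ} (v : Fin k → ℕ) (c : Fin k) (a : ℕ)
    (ha1 : v c < a) (ha2 : a ≤ 2 * v c)
    (A : Fin N → Fin k → ℕ) (hA : ∀ r j, A r j < v j) (hLA : isLA A v t) :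
    isLA (fun (r : Fin N ⊕ Fin N) (j : Fin k) =>
        match r with
        | Sum.inl r => A r j
        | Sum.inr r => if j = c then (if A r j < a - v c then A r j + v c else A r j)
                       else A r j)
      (Function.update v c a) t := by

  classical
  obtain ⟨hMCA, hLoc⟩ := hLA
  set B : (Fin N ⊕ Fin N) → Fin k → ℕ := fun (r : Fin N ⊕ Fin N) (j : Fin k) =>
    match r with
    | Sum.inl r => A r j
    | Sum.inr r => if j = c then (if A r j < a - v c then A r j + v c else A r j) else A r j
    with hBdef
  have hBl : ∀ (r : Fin N) (j : Fin k), B (Sum.inl r) j = A r j := fun _ _ => rfl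
  have hBr : ∀ (r : Fin N) (j : Fin k), B (Sum.inr r) j =
      if j = c then (if A r j < a - v c then A r j + v c else A r j) else A r j := fun _ _ => rfl
  have memL : ∀ (I : Finset (Fin k)) (σ : Fin k → ℕ) (r : Fin N),
      Sum.inl r ∈ rowsOf B I σ ↔ r ∈ rowsOf A I σ := by
    intro I σ r
    simp only [rowsOf, mem_filter, mem_univ, true_and, hBl]
  have memR : ∀ (I : Finset (Fin k)) (σ : Fin k → ℕ) (r : Fin N),
      Sum.inr r ∈ rowsOf B I σ ↔
        ∀ i ∈ I, (if i = c then (if A r i < a - v c then A r i + v c else A r i) else A r i) = σ i := by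
    intro I σ r
    simp only [rowsOf, mem_filter, mem_univ, true_and, hBr]
  have memA : ∀ (I : Finset (Fin k)) (σ : Fin k → ℕ) (r : Fin N),
      r ∈ rowsOf A I σ ↔ ∀ i ∈ I, A r i = σ i := by
    intro I σ r
    simp [rowsOf]
  have key : ∀ (I : Finset (Fin k)) (σ : Fin k → ℕ),
      isInter (Function.update v c a) t I σ →
      ∃ τ : Fin k → ℕ, isInter v t I τ ∧ (∀ i ∈ I, i ≠ c → τ i = σ i) ∧
        (c ∈ I → v c ≤ σ c → σ c = τ c + v c) ∧
        (c ∈ I → σ c < v c → τ c = σ c) ∧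
        (∀ r : Fin N, Sum.inl r ∈ rowsOf B I σ ↔
            (¬(c ∈ I ∧ v c ≤ σ c) ∧ r ∈ rowsOf A I τ)) ∧
        (∀ r : Fin N, Sum.inr r ∈ rowsOf B I σ ↔
            (¬(c ∈ I ∧ σ c < a - v c) ∧ r ∈ rowsOf A I τ)) := by
    intro I σ hI
    obtain ⟨hcard, hσ⟩ := hI
    by_cases hc : c ∈ I
    · have hσc : σ c < a := by have := hσ c hc; rwa [Function.update_self] at this
      have hσ' : ∀ i ∈ I, i ≠ c → σ i < v i := by
        intro i hi hic
        have := hσ i hi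
        rwa [Function.update_of_ne hic] at this
      by_cases hLc : v c ≤ σ c
      · refine ⟨Function.update σ c (σ c - v c), ⟨hcard, ?_⟩, ?_, ?_, ?_, ?_, ?_⟩
        · intro i hi
          by_cases hic : i = c
          · subst hic; rw [Function.update_self]; omega
          · rw [Function.update_of_ne hic]; exact hσ' i hi hic
        · intro i hi hic; rw [Function.update_of_ne hic]
        · intro _ _; rw [Function.update_self]; omega
        · intro _ h; exact absurd h (by omega)
        · intro r
          constructor
          · intro hr
            exfalso
            rw [memL, memA] at hr
            have h1 := hr c hc
            have h2 := hA r c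
            omega
          · rintro ⟨h1, -⟩; exact absurd ⟨hc, hLc⟩ h1
        · intro r
          rw [memR, memA]
          constructor
          · intro h
            refine ⟨fun h2 => absurd h2.2 (by omega), ?_⟩
            intro i hi
            by_cases hic : i = c
            · subst hic
              have h1 := h i hc
              rw [if_pos rfl] at h1
              rw [Function.update_self]
              have h2 := hA r i
              split at h1 <;> omega
            · rw [Function.update_of_ne hic]
              have h1 := h i hi
              rwa [if_neg hic] at h1
          · rintro ⟨-, h⟩ i hi
            by_cases hic : i = c
            · subst hic
              have hτ := h i hc
              rw [Function.update_self] at hτ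
              rw [if_pos rfl, if_pos (by omega)]
              omega
            · rw [if_neg hic]
              have h1 := h i hi
              rwa [Function.update_of_ne hic] at h1
      · push_neg at hLc
        refine ⟨σ, ⟨hcard, ?_⟩, fun _ _ _ => rfl, fun _ h => absurd h (by omega),
          fun _ _ => rfl, ?_, ?_⟩
        · intro i hi
          by_cases hic : i = c
          · subst hic; exact hLc
          · exact hσ' i hi hic
        · intro r
          rw [memL]
          exact ⟨fun h => ⟨fun h2 => absurd h2.2 (by omega), h⟩, fun h => h.2⟩
        · intro r
          rw [memR, memA]
          by_cases hT : σ c < a - v c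
          · constructor
            · intro h
              exfalso
              have h1 := h c hc
              rw [if_pos rfl] at h1
              have h2 := hA r c
              split at h1 <;> omega
            · rintro ⟨h1, -⟩; exact absurd ⟨hc, hT⟩ h1
          · constructor
            · intro h
              refine ⟨fun h2 => absurd h2.2 hT, ?_⟩
              intro i hi
              by_cases hic : i = c
              · subst hic
                have h1 := h i hc
                rw [if_pos rfl] at h1
                have h2 := hA r i
                split at h1 <;> omega
              · have h1 := h i hi
                rwa [if_neg hic] at h1
            · rintro ⟨-, h⟩ i hi
              by_cases hic : i = c
              · subst hic
                have h1 := h i hc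
                rw [if_pos rfl, if_neg (by omega)]
                exact h1
              · rw [if_neg hic]; exact h i hi
    · refine ⟨σ, ⟨hcard, ?_⟩, fun _ _ _ => rfl, fun h => absurd h hc, fun h => absurd h hc,
        ?_, ?_⟩
      · intro i hi
        have hic : i ≠ c := fun h => hc (h ▸ hi)
        have h1 := hσ i hi
        rwa [Function.update_of_ne hic] at h1
      · intro r
        rw [memL]
        exact ⟨fun h => ⟨fun h2 => hc h2.1, h⟩, fun h => h.2⟩
      · intro r
        rw [memR, memA]
        constructor
        · intro h
          refine ⟨fun h2 => hc h2.1, fun i hi => ?_⟩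
          have hic : i ≠ c := fun h' => hc (h' ▸ hi)
          have h1 := h i hi
          rwa [if_neg hic] at h1
        · rintro ⟨-, h⟩ i hi
          have hic : i ≠ c := fun h' => hc (h' ▸ hi)
          rw [if_neg hic]
          exact h i hi
  constructor
  · intro I σ hI
    obtain ⟨τ, hτ, -, -, -, hinl, hinr⟩ := key I σ hI
    obtain ⟨r, hr⟩ := hMCA I τ hτ
    by_cases hL : c ∈ I ∧ v c ≤ σ c
    · refine ⟨Sum.inr r, (hinr r).2 ⟨?_, hr⟩⟩
      rintro ⟨-, h2⟩
      exact absurd h2 (by omega)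
    · exact ⟨Sum.inl r, (hinl r).2 ⟨hL, hr⟩⟩
  · intro I₁ σ₁ I₂ σ₂ h₁ h₂ hEq
    obtain ⟨τ₁, hτ₁, hag₁, hhi₁, hlo₁, hinl₁, hinr₁⟩ := key I₁ σ₁ h₁
    obtain ⟨τ₂, hτ₂, hag₂, hhi₂, hlo₂, hinl₂, hinr₂⟩ := key I₂ σ₂ h₂
    obtain ⟨r₁, hr₁⟩ := hMCA I₁ τ₁ hτ₁
    obtain ⟨r₂, hr₂⟩ := hMCA I₂ τ₂ hτ₂
    have hTiff : (c ∈ I₁ ∧ σ₁ c < a - v c) ↔ (c ∈ I₂ ∧ σ₂ c < a - v c) := by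
      constructor
      · intro hT1
        by_contra hT2
        have h := (hinr₂ r₂).2 ⟨hT2, hr₂⟩
        rw [← hEq] at h
        exact ((hinr₁ r₂).1 h).1 hT1
      · intro hT2
        by_contra hT1
        have h := (hinr₁ r₁).2 ⟨hT1, hr₁⟩
        rw [hEq] at h
        exact ((hinr₂ r₁).1 h).1 hT2
    have hLiff : (c ∈ I₁ ∧ v c ≤ σ₁ c) ↔ (c ∈ I₂ ∧ v c ≤ σ₂ c) := by
      constructor
      · intro hL1
        by_contra hL2
        have h := (hinl₂ r₂).2 ⟨hL2, hr₂⟩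
        rw [← hEq] at h
        exact ((hinl₁ r₂).1 h).1 hL1
      · intro hL2
        by_contra hL1
        have h := (hinl₁ r₁).2 ⟨hL1, hr₁⟩
        rw [hEq] at h
        exact ((hinl₂ r₁).1 h).1 hL2
    have hrowsA : rowsOf A I₁ τ₁ = rowsOf A I₂ τ₂ := by
      by_cases hT1 : c ∈ I₁ ∧ σ₁ c < a - v c
      · have hT2 : c ∈ I₂ ∧ σ₂ c < a - v c := hTiff.1 hT1
        have hL1 : ¬(c ∈ I₁ ∧ v c ≤ σ₁ c) := fun h => absurd h.2 (by have := hT1.2; omega)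
        have hL2 : ¬(c ∈ I₂ ∧ v c ≤ σ₂ c) := fun h => absurd h.2 (by have := hT2.2; omega)
        ext r
        constructor
        · intro hr
          have h := (hinl₁ r).2 ⟨hL1, hr⟩
          rw [hEq] at h
          exact ((hinl₂ r).1 h).2
        · intro hr
          have h := (hinl₂ r).2 ⟨hL2, hr⟩
          rw [← hEq] at h
          exact ((hinl₁ r).1 h).2
      · have hT2 : ¬(c ∈ I₂ ∧ σ₂ c < a - v c) := fun h => hT1 (hTiff.2 h)
        ext r
        constructor
        · intro hr
          have h := (hinr₁ r).2 ⟨hT1, hr⟩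
          rw [hEq] at h
          exact ((hinr₂ r).1 h).2
        · intro hr
          have h := (hinr₂ r).2 ⟨hT2, hr⟩
          rw [← hEq] at h
          exact ((hinr₁ r).1 h).2
    obtain ⟨hIeq, hτeq⟩ := hLoc I₁ τ₁ I₂ τ₂ hτ₁ hτ₂ hrowsA
    refine ⟨hIeq, fun i hi => ?_⟩
    by_cases hic : i = c
    · subst hic
      by_cases hL1 : v i ≤ σ₁ i
      · have hL2 : v i ≤ σ₂ i := (hLiff.1 ⟨hi, hL1⟩).2
        have e1 := hhi₁ hi hL1
        have e2 := hhi₂ (hIeq ▸ hi) hL2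
        have e3 := hτeq i hi
        omega
      · push_neg at hL1
        have hL2 : σ₂ i < v i := by
          by_contra h
          exact absurd ((hLiff.2 ⟨hIeq ▸ hi, by omega⟩).2) (by omega)
        have e1 := hlo₁ hi hL1
        have e2 := hlo₂ (hIeq ▸ hi) hL2
        have e3 := hτeq i hi
        omega
    · have e1 := hag₁ i hi hic
      have e2 := hag₂ i (hIeq ▸ hi) hic
      have e3 := hτeq i hi
      omega
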